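/- Perfect escrow secrecy (combinatorial core): let α_ν be a schematic IF behavior in which variable ν occurs as the value argument of an iprotect(P_r, ν) event by P_s at position i with result handle η, and suppose no later event in α_ν is an iretrieve(P_s, η) executed by P_r. Then for every bitstring b of the unique length ℓ compatible with η, the substituted sequence α_ν[b/ν] is again a valid IF behavior. -/

import Mathlib

/-! IF escrow model: protstore maps (handle, source, recipient) to values. -/

inductive PCmd (P H V : Type) where
  | iprotect (pr : P) (v : V)
  | iretrieve (ps : P) (η : H)

inductive PRes (H V : Type) where
  | handle (η : H)
  | val (v : V)
  | fail

structure PEvent (P H V : Type) where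
  cmd : PCmd P H V
  prin : P
  res : PRes H V

abbrev PState (P H V : Type) := H → P → P → Option V

inductive PStep {P H V : Type} [DecidableEq P] [DecidableEq H] :
    PState P H V → PEvent P H V → PState P H V → Prop where
  | protect (σ : PState P H V) (ps pr : P) (v : V) (η : H)
      (hfresh : ∀ (a b : P), σ η a b = none) :
      PStep σ ⟨PCmd.iprotect pr v, ps, PRes.handle η⟩
        (fun η' a b => if η' = η ∧ a = ps ∧ b = pr then some v else σ η' a b)
  | retrieve_some (σ : PState P H V) (ps pr : P) (η : H) (v : V)
      (hv : σ η ps pr = some v) :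
      PStep σ ⟨PCmd.iretrieve ps η, pr, PRes.val v⟩ σ
  | retrieve_fail (σ : PState P H V) (ps pr : P) (η : H)
      (hv : σ η ps pr = none) :
      PStep σ ⟨PCmd.iretrieve ps η, pr, PRes.fail⟩ σ

inductive PBehavior {P H V : Type} [DecidableEq P] [DecidableEq H] :
    PState P H V → List (PEvent P H V) → PState P H V → Prop where
  | nil (σ : PState P H V) : PBehavior σ [] σ
  | cons {σ σ' σ'' : PState P H V} {e : PEvent P H V} {es : List (PEvent P H V)} :
      PStep σ e σ' → PBehavior σ' es σ'' → PBehavior σ (e :: es) σ''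

lemma tail_subst {P H V : Type} [DecidableEq P] [DecidableEq H]
    (ps pr : P) (η : H) :
    ∀ (es : List (PEvent P H V)) (σ τ σ'' : PState P H V),
    PBehavior σ es σ'' →
    (∀ η' a b, ¬(η' = η ∧ a = ps ∧ b = pr) → σ η' a b = τ η' a b) →
    (∃ v, σ η ps pr = some v) → (∃ w, τ η ps pr = some w) →
    (∀ e ∈ es, ∀ r, e ≠ ⟨PCmd.iretrieve ps η, pr, r⟩) →
    ∃ τ'', PBehavior τ es τ'' := by
  intro es
  induction es with
  | nil => intro σ τ σ'' _ _ _ _ _; exact ⟨τ, PBehavior.nil τ⟩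
  | cons e rest ih =>
    intro σ τ σ'' hβ hag hσ hτ hnr
    cases hβ with
    | cons hstep hrest =>
      rename_i σ'
      cases hstep with
      | protect ps' pr' v η' hfresh =>
        -- η' ≠ η since σ η ps pr = some
        obtain ⟨v0, hv0⟩ := hσ
        have hη : η' ≠ η := by
          intro h; rw [h] at hfresh
          rw [hfresh ps pr] at hv0; cases hv0
        have hfresh' : ∀ a b', τ η' a b' = none := by
          intro a b'
          have := hag η' a b' (by intro ⟨h1, _⟩; exact hη h1)
          rw [← this]; exact hfresh a b'
        refine ?_
        obtain ⟨τ'', hτ''⟩ := ih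
          (fun η'' a c => if η'' = η' ∧ a = ps' ∧ c = pr' then some v else σ η'' a c)
          (fun η'' a c => if η'' = η' ∧ a = ps' ∧ c = pr' then some v else τ η'' a c)
          σ'' hrest
          (by
            intro η'' a c hne
            by_cases h : η'' = η' ∧ a = ps' ∧ c = pr'
            · simp [h]
            · simp only [if_neg h]; exact hag η'' a c hne)
          (by
            refine ⟨v0, ?_⟩
            have hne : ¬(η = η' ∧ ps = ps' ∧ pr = pr') :=
              fun ⟨h1, _⟩ => hη h1.symm
            simp only [hne, if_false]
            exact hv0)
          (by
            obtain ⟨w, hw⟩ := hτ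
            refine ⟨w, ?_⟩
            have hne : ¬(η = η' ∧ ps = ps' ∧ pr = pr') :=
              fun ⟨h1, _⟩ => hη h1.symm
            simp only [hne, if_false]
            exact hw)
          (fun e' he' => hnr e' (List.mem_cons_of_mem _ he'))
        exact ⟨τ'', PBehavior.cons (PStep.protect τ ps' pr' v η' hfresh') hτ''⟩
      | retrieve_some ps' pr' η' v hv =>
        have hne : ¬(η' = η ∧ ps' = ps ∧ pr' = pr) := by
          intro ⟨h1, h2, h3⟩
          exact hnr _ List.mem_cons_self (PRes.val v)
            (by rw [h1, h2, h3])
        have hv' : τ η' ps' pr' = some v := by rw [← hag η' ps' pr' hne]; exact hv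
        obtain ⟨τ'', hτ''⟩ := ih σ τ σ'' hrest hag hσ hτ
          (fun e' he' => hnr e' (List.mem_cons_of_mem _ he'))
        exact ⟨τ'', PBehavior.cons (PStep.retrieve_some τ ps' pr' η' v hv') hτ''⟩
      | retrieve_fail ps' pr' η' hv =>
        have hne : ¬(η' = η ∧ ps' = ps ∧ pr' = pr) := by
          intro ⟨h1, h2, h3⟩
          exact hnr _ List.mem_cons_self PRes.fail
            (by rw [h1, h2, h3])
        have hv' : τ η' ps' pr' = none := by rw [← hag η' ps' pr' hne]; exact hv
        obtain ⟨τ'', hτ''⟩ := ih σ τ σ'' hrest hag hσ hτ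
          (fun e' he' => hnr e' (List.mem_cons_of_mem _ he'))
        exact ⟨τ'', PBehavior.cons (PStep.retrieve_fail τ ps' pr' η' hv') hτ''⟩

lemma escrow_aux {P H V : Type} [DecidableEq P] [DecidableEq H]
    (ps pr : P) (v0 : V) (η : H) (b : V) :
    ∀ (es : List (PEvent P H V)) (i : ℕ) (σ σfin : PState P H V),
    PBehavior σ es σfin →
    ∀ (hi : i < es.length),
    es[i]'hi = ⟨PCmd.iprotect pr v0, ps, PRes.handle η⟩ →
    (∀ j (hj : j < es.length), i < j →
      ∀ r, es[j]'hj ≠ ⟨PCmd.iretrieve ps η, pr, r⟩) →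
    ∃ σ', PBehavior σ (es.set i ⟨PCmd.iprotect pr b, ps, PRes.handle η⟩) σ' := by
  intro es
  induction es with
  | nil => intro i σ σfin _ hi; simp at hi
  | cons e rest ih =>
    intro i σ σfin hβ hi hev hnr
    cases hβ with
    | cons hstep hrest =>
      rename_i σ'
      cases i with
      | zero =>
        simp only [List.getElem_cons_zero] at hev
        subst hev
        cases hstep with
        | protect _ _ _ _ hfresh =>
          -- new step with value b
          obtain ⟨τ'', hτ''⟩ := tail_subst ps pr η rest
            (fun η' a c => if η' = η ∧ a = ps ∧ c = pr then some v0 else σ η' a c)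
            (fun η' a c => if η' = η ∧ a = ps ∧ c = pr then some b else σ η' a c)
            σfin hrest
            (by intro η' a c hne; simp [if_neg hne])
            ⟨v0, by simp⟩ ⟨b, by simp⟩
            (by
              intro e' he' r hcon
              obtain ⟨j, hj, hje⟩ := List.mem_iff_getElem.mp he'
              exact hnr (j+1) (by simpa using Nat.succ_lt_succ hj)
                (Nat.succ_pos j) r (by simpa [hje] using hcon))
          exact ⟨τ'', by
            simpa using PBehavior.cons (PStep.protect σ ps pr b η hfresh) hτ''⟩
      | succ k =>
        simp only [List.getElem_cons_succ] at hev
        obtain ⟨τ'', hτ''⟩ := ih k σ' σfin hrest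
          (by simpa using Nat.lt_of_succ_lt_succ hi) hev
          (by
            intro j hj hkj r
            exact hnr (j+1) (by simpa using Nat.succ_lt_succ hj)
              (Nat.succ_lt_succ hkj) r)
        exact ⟨τ'', by simpa using PBehavior.cons hstep hτ''⟩

/-- perfect escrow secrecy (combinatorial core).  If a behavior contains an
`iprotect pr v₀` by `ps` at position `i` with result handle `η`, and no later event is an
`iretrieve ps η` executed by `pr`, then replacing the escrowed value `v₀` by any bitstring
`b` of the same length yields again a valid IF behavior. -/
theorem escrow_secrecy_substitution
    {P H : Type} [DecidableEq P] [DecidableEq H]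
    (es : List (PEvent P H (List Bool))) (σfin : PState P H (List Bool))
    (hβ : PBehavior (fun _ _ _ => none) es σfin)
    (i : ℕ) (hi : i < es.length) (ps pr : P) (v0 : List Bool) (η : H)
    (hev : es[i]'hi = ⟨PCmd.iprotect pr v0, ps, PRes.handle η⟩)
    (hnr : ∀ j (hj : j < es.length), i < j →
      ∀ r, es[j]'hj ≠ ⟨PCmd.iretrieve ps η, pr, r⟩)
    (b : List Bool) (hlen : b.length = v0.length) :
    ∃ σ' : PState P H (List Bool),
      PBehavior (fun _ _ _ => none)
        (es.set i ⟨PCmd.iprotect pr b, ps, PRes.handle η⟩) σ' :=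
  escrow_aux ps pr v0 η b es i _ σfin hβ hi hev hnr
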